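/- Let A be a nonempty subset of a topological space X such that every finite choice of closed neighborhoods of finitely many points of A has nonempty intersection. Then there exists a set M ⊇ A that is maximal finitely non-Urysohn; in particular M satisfies M = ⋂{cl_θ(⋂_{x∈F} closure(U_x)) : F nonempty finite subset of M, U_x an open neighborhood of x}. -/

import Mathlib

open Set Topology Cardinal

universe u

variable {X : Type u}

/-- The θ-closure of a set. -/
def thetaCl [TopologicalSpace X] (A : Set X) : Set X :=
  {x | ∀ U : Set X, IsOpen U → x ∈ U → (closure U ∩ A).Nonempty}

/-- The θ-closed hull of a set. -/
def thetaHull [TopologicalSpace X] (A : Set X) : Set X :=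
  ⋂₀ {C : Set X | thetaCl C = C ∧ A ⊆ C}

/-- A nonempty set is finitely non-Urysohn if every finite choice of closed
neighborhoods (closures of open neighborhoods) of finitely many of its points
has nonempty intersection. -/
def FinNonUrysohn [TopologicalSpace X] (A : Set X) : Prop :=
  A.Nonempty ∧ ∀ F : Set X, F ⊆ A → F.Nonempty → F.Finite →
    ∀ U : X → Set X, (∀ x ∈ F, IsOpen (U x) ∧ x ∈ U x) →
      (⋂ x ∈ F, closure (U x)).Nonempty

/-- The non-Urysohn number `nu(X)`. -/
noncomputable def nuNumber (X : Type u) [TopologicalSpace X] : Cardinal.{u} :=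
  1 + ⨆ A : {A : Set X // FinNonUrysohn A}, #↥A.1

/-- The Urysohn number `U(X)`. -/
noncomputable def UrysohnNumber (X : Type u) [TopologicalSpace X] : Cardinal.{u} :=
  sInf {κ : Cardinal.{u} | ∀ A : Set X, κ ≤ #↥A → ∃ U : X → Set X,
    (∀ a ∈ A, IsOpen (U a) ∧ a ∈ U a) ∧ (⋂ a ∈ A, closure (U a)) = ∅}

/-- The cardinal function `κ(X)`: the smallest infinite cardinal such that each
point has a family of at most that many closed neighborhoods cofinal (under
reverse inclusion) in the closures of its open neighborhoods. -/
noncomputable def kappaInv (X : Type u) [TopologicalSpace X] : Cardinal.{u} :=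
  sInf {κ : Cardinal.{u} | ℵ₀ ≤ κ ∧ ∀ x : X, ∃ V : Set (Set X), #↥V ≤ κ ∧
    (∀ W ∈ V, IsClosed W ∧ W ∈ nhds x) ∧
    ∀ U : Set X, IsOpen U → x ∈ U → ∃ W ∈ V, W ⊆ closure U}

/-- The character `χ(X)`. -/
noncomputable def chiChar (X : Type u) [TopologicalSpace X] : Cardinal.{u} :=
  sInf {κ : Cardinal.{u} | ℵ₀ ≤ κ ∧ ∀ x : X, ∃ B : Set (Set X), #↥B ≤ κ ∧
    (∀ U ∈ B, U ∈ nhds x) ∧ ∀ S ∈ nhds x, ∃ U ∈ B, U ⊆ S}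

/-- The θ-density `d_θ(X)`. -/
noncomputable def dTheta (X : Type u) [TopologicalSpace X] : Cardinal.{u} :=
  sInf {c : Cardinal.{u} | ∃ A : Set X, thetaCl A = Set.univ ∧ #↥A = c}

/-- The cardinal function `sL_θ(X)`. -/
noncomputable def sLtheta (X : Type u) [TopologicalSpace X] : Cardinal.{u} :=
  sInf {τ : Cardinal.{u} | ℵ₀ ≤ τ ∧ ∀ A : Set X, ∀ 𝒰 : Set (Set X),
    (∀ U ∈ 𝒰, IsOpen U) → thetaCl A ⊆ ⋃₀ 𝒰 →
    ∃ 𝒱 ⊆ 𝒰, #↥𝒱 ≤ τ ∧ A ⊆ closure (⋃₀ 𝒱)}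

/-- The cardinal function `wL_c(X)`. -/
noncomputable def wLc (X : Type u) [TopologicalSpace X] : Cardinal.{u} :=
  sInf {τ : Cardinal.{u} | ℵ₀ ≤ τ ∧ ∀ A : Set X, IsClosed A → ∀ 𝒰 : Set (Set X),
    (∀ U ∈ 𝒰, IsOpen U) → A ⊆ ⋃₀ 𝒰 →
    ∃ 𝒱 ⊆ 𝒰, #↥𝒱 ≤ τ ∧ A ⊆ closure (⋃₀ 𝒱)}

/-- The almost Lindelöf degree `aL(X)`. -/
noncomputable def aLdeg (X : Type u) [TopologicalSpace X] : Cardinal.{u} :=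
  sInf {τ : Cardinal.{u} | ℵ₀ ≤ τ ∧ ∀ 𝒰 : Set (Set X),
    (∀ U ∈ 𝒰, IsOpen U) → ⋃₀ 𝒰 = Set.univ →
    ∃ 𝒱 ⊆ 𝒰, #↥𝒱 ≤ τ ∧ (⋃ V ∈ 𝒱, closure V) = Set.univ}

/-- `X` is a Urysohn space: distinct points have open neighborhoods with
disjoint closures. -/
def UrysohnSpace (X : Type u) [TopologicalSpace X] : Prop :=
  ∀ x y : X, x ≠ y → ∃ U V : Set X, IsOpen U ∧ IsOpen V ∧ x ∈ U ∧ y ∈ V ∧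
    closure U ∩ closure V = ∅

/-- For a set `S`, the intersection over all choices of closed neighborhoods of
the points of `S` of the θ-closures of the intersections of the choices. -/
def capSet [TopologicalSpace X] (S : Set X) : Set X :=
  {y | ∀ U : X → Set X, (∀ a ∈ S, IsOpen (U a) ∧ a ∈ U a) →
    y ∈ thetaCl (⋂ a ∈ S, closure (U a))}

/-- For a set `M`, the intersection over all nonempty finite `F ⊆ M` and all
choices of open neighborhoods of points of `F` of
`cl_θ(⋂_{x∈F} closure (U x))`. -/
def fnuCap [TopologicalSpace X] (M : Set X) : Set X :=
  {y | ∀ F : Set X, F ⊆ M → F.Nonempty → F.Finite → ∀ U : X → Set X,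
    (∀ x ∈ F, IsOpen (U x) ∧ x ∈ U x) →
    y ∈ thetaCl (⋂ x ∈ F, closure (U x))}

lemma chain_finite_subset {c : Set (Set X)} (hc : IsChain (· ⊆ ·) c)
    (hne : c.Nonempty) {F : Set X} (hF : F.Finite) (hsub : F ⊆ ⋃₀ c) :
    ∃ t ∈ c, F ⊆ t := by
  refine @Set.Finite.induction_on _ (fun F _ => F ⊆ ⋃₀ c → ∃ t ∈ c, F ⊆ t) F
    hF (fun _ => ⟨hne.choose, hne.choose_spec, empty_subset _⟩) ?_ hsub
  intro a F haF hFfin ih hsub'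
  obtain ⟨t, htc, hFt⟩ := ih (fun x hx => hsub' (Or.inr hx))
  obtain ⟨s, hsc, has⟩ := hsub' (Or.inl rfl)
  rcases eq_or_ne s t with rfl | hst
  · exact ⟨s, hsc, insert_subset has hFt⟩
  rcases hc hsc htc hst with h | h
  · exact ⟨t, htc, insert_subset (h has) hFt⟩
  · exact ⟨s, hsc, insert_subset has (hFt.trans h)⟩

lemma union_chain_fnu {c : Set (Set X)} [TopologicalSpace X]
    (hcS : ∀ t ∈ c, FinNonUrysohn t) (hc : IsChain (· ⊆ ·) c)
    (hne : c.Nonempty) : FinNonUrysohn (⋃₀ c) := by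
  constructor
  · obtain ⟨t, htc⟩ := hne
    obtain ⟨x, hx⟩ := (hcS t htc).1
    exact ⟨x, t, htc, hx⟩
  · intro F hF hFne hFfin U hU
    obtain ⟨t, htc, hFt⟩ := chain_finite_subset hc hne hFfin hF
    exact (hcS t htc).2 F hFt hFne hFfin U hU

theorem statement18 [TopologicalSpace X] (A : Set X) (hA : FinNonUrysohn A) :
    ∃ M : Set X, A ⊆ M ∧ FinNonUrysohn M ∧
      (∀ B : Set X, FinNonUrysohn B → M ⊆ B → M = B) ∧ M = fnuCap M := by
  obtain ⟨M, hAM, hMmax⟩ := zorn_subset_nonempty {B : Set X | FinNonUrysohn B}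
    (fun c hcS hc hne => ⟨⋃₀ c, union_chain_fnu (fun t ht => hcS ht) hc hne,
      fun s hs => subset_sUnion_of_mem hs⟩) A hA
  have hMS : FinNonUrysohn M := hMmax.prop
  have hMmax' : ∀ B : Set X, FinNonUrysohn B → M ⊆ B → M = B := by
    intro B hB hMB
    exact hMmax.eq_of_subset hB hMB
  refine ⟨M, hAM, hMS, hMmax', ?_⟩
  apply Subset.antisymm
  · -- M ⊆ fnuCap M
    intro y hy F hFM hFne hFfin U hU
    intro V hVopen hyV
    -- consider F ∪ {y}
    classical
    set U' : X → Set X := fun x => if x = y then (if y ∈ F then V ∩ U y else V) else U x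
      with hU'def
    have hins : ∀ x ∈ insert y F, IsOpen (U' x) ∧ x ∈ U' x := by
      intro x hx
      rcases eq_or_ne x y with rfl | hxy
      · simp only [U', if_pos rfl]
        by_cases hyF : x ∈ F
        · simp only [if_pos hyF]
          exact ⟨hVopen.inter (hU x hyF).1, hyV, (hU x hyF).2⟩
        · simp only [if_neg hyF]
          exact ⟨hVopen, hyV⟩
      · simp only [U', if_neg hxy]
        rcases hx with h | h
        · exact absurd h hxy
        · exact hU x h
    obtain ⟨z, hz⟩ := hMS.2 (insert y F) (insert_subset hy hFM)
      ⟨y, Or.inl rfl⟩ (hFfin.insert y) U' hins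
    rw [mem_iInter₂] at hz
    have hzV : z ∈ closure V := by
      have := hz y (Or.inl rfl)
      simp only [U', if_pos rfl] at this
      by_cases hyF : y ∈ F
      · simp only [if_pos hyF] at this
        exact closure_mono inter_subset_left this
      · simpa only [if_neg hyF] using this
    refine ⟨z, hzV, ?_⟩
    rw [mem_iInter₂]
    intro x hxF
    have := hz x (Or.inr hxF)
    rcases eq_or_ne x y with rfl | hxy
    · simp only [U', if_pos rfl, if_pos hxF] at this
      exact closure_mono inter_subset_right this
    · simpa only [U', if_neg hxy] using this
  · -- fnuCap M ⊆ M
    intro y hy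
    have hMy : FinNonUrysohn (insert y M) := by
      refine ⟨⟨y, Or.inl rfl⟩, ?_⟩
      intro F hF hFne hFfin U hU
      rcases Classical.em (y ∈ F) with hyF | hyF
      · rcases Classical.em (F \ {y}).Nonempty with hne | hne
        · have hF' : F \ {y} ⊆ M := by
            intro x hx
            rcases hF hx.1 with h | h
            · exact absurd h hx.2
            · exact h
          have := hy (F \ {y}) hF' hne hFfin.diff U
            (fun x hx => hU x hx.1)
          have h2 := this (U y) (hU y hyF).1 (hU y hyF).2
          obtain ⟨z, hz1, hz2⟩ := h2
          refine ⟨z, ?_⟩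
          rw [mem_iInter₂] at hz2 ⊢
          intro x hx
          rcases eq_or_ne x y with rfl | hxy
          · exact hz1
          · exact hz2 x ⟨hx, hxy⟩
        · have hFy : F = {y} := by
            rw [not_nonempty_iff_eq_empty, diff_eq_empty] at hne
            exact hne.antisymm (singleton_subset_iff.2 hyF)
          subst hFy
          exact ⟨y, by simpa using subset_closure (hU y rfl).2⟩
      · have hFM : F ⊆ M := by
          intro x hx
          rcases hF hx with h | h
          · exact absurd (h ▸ hx) hyF
          · exact h
        exact hMS.2 F hFM hFne hFfin U hU
    have := hMmax' (insert y M) hMy (subset_insert _ _)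
    rw [this]
    exact Or.inl rfl
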